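/- Let R be a ring (not assumed unital), J a nilpotent two-sided ideal of R, and R' a subring of R such that R' + J² = R. Then R' = R. -/

import Mathlib

open scoped Pointwise

/-- `setPow s n` is the set of products of `n+1` elements of `s` (pointwise). -/
def setPow {R : Type*} [Mul R] (s : Set R) : ℕ → Set R
  | 0 => s
  | n + 1 => setPow s n * s

lemma setPow_subset_ideal {R : Type*} [NonUnitalRing R] (J : TwoSidedIdeal R) :
    ∀ n, setPow (J : Set R) n ⊆ (J : Set R)
  | 0 => subset_rfl
  | n + 1 => by
      rintro x ⟨p, hp, y, hy, rfl⟩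
      exact J.mul_mem_left _ _ hy

lemma setPow_mul_mem {R : Type*} [Semigroup R] (s : Set R) :
    ∀ (b a : ℕ) (p z : R), p ∈ setPow s a → z ∈ setPow s b →
      p * z ∈ setPow s (a + b + 1)
  | 0, a, p, z, hp, hz => ⟨p, hp, z, hz, rfl⟩
  | b + 1, a, p, z, hp, hz => by
      obtain ⟨z', hz', y, hy, rfl⟩ := hz
      refine ⟨p * z', setPow_mul_mem s b a p z' hp hz', y, hy, ?_⟩
      show p * z' * y = p * (z' * y)
      rw [mul_assoc]

lemma setPow_succ_subset {R : Type*} [NonUnitalRing R] (J : TwoSidedIdeal R) :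
    ∀ n, setPow (J : Set R) (n + 1) ⊆ setPow (J : Set R) n
  | 0 => by
      rintro x ⟨p, hp, y, hy, rfl⟩
      exact J.mul_mem_left _ _ hy
  | n + 1 => by
      rintro x ⟨p, hp, y, hy, rfl⟩
      obtain ⟨p', hp', y', hy', rfl⟩ := hp
      exact ⟨p', hp', y' * y, J.mul_mem_left _ _ hy, (mul_assoc ..).symm⟩

lemma setPow_le {R : Type*} [NonUnitalRing R] (J : TwoSidedIdeal R) {m n : ℕ} (h : n ≤ m) :
    setPow (J : Set R) m ⊆ setPow (J : Set R) n := by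
  induction h with
  | refl => exact subset_rfl
  | step h ih => exact fun x hx => ih (setPow_succ_subset J _ hx)

lemma mul_mem_closure_aux {R : Type*} [NonUnitalRing R] {S T U : Set R} {x y : R}
    (hx : x ∈ AddSubgroup.closure S) (hy : y ∈ AddSubgroup.closure T)
    (h : ∀ a ∈ S, ∀ b ∈ T, a * b ∈ AddSubgroup.closure U) :
    x * y ∈ AddSubgroup.closure U := by
  induction hx using AddSubgroup.closure_induction with
  | mem a ha =>
      induction hy using AddSubgroup.closure_induction with
      | mem b hb => exact h a ha b hb
      | zero => simpa using AddSubgroup.zero_mem _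
      | add b c _ _ hb hc => rw [mul_add]; exact AddSubgroup.add_mem _ hb hc
      | neg b _ hb => rw [mul_neg]; exact AddSubgroup.neg_mem _ hb
  | zero => simpa using AddSubgroup.zero_mem _
  | add a b _ _ ha hb => rw [add_mul]; exact AddSubgroup.add_mem _ ha hb
  | neg a _ ha => rw [neg_mul]; exact AddSubgroup.neg_mem _ ha

/-- Let `R` be a (not necessarily unital) ring, `J` a nilpotent two-sided ideal, and `R'`
a subring with `R' + J² = R`.  Then `R' = R`. -/
theorem subring_plus_sq_nilpotent_eq {R : Type*} [NonUnitalRing R]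
    (J : TwoSidedIdeal R) (hnil : ∃ n : ℕ, setPow (J : Set R) n ⊆ {0})
    (R' : NonUnitalSubring R)
    (hsum : ∀ r : R, ∃ a ∈ R', r - a ∈ AddSubgroup.closure ((J : Set R) * (J : Set R))) :
    ∀ r : R, r ∈ R' := by
  set C : ℕ → AddSubgroup R := fun m => AddSubgroup.closure (setPow (J : Set R) m) with hC
  have hJAdd : ∀ m, C m ≤ AddSubgroup.mk
      ⟨⟨(J : Set R), fun ha hb => J.add_mem ha hb⟩, J.zero_mem⟩
      (fun {x} hx => J.neg_mem hx) := by
    intro m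
    exact AddSubgroup.closure_le _ |>.2 (setPow_subset_ideal J m)
  have hCJ : ∀ m, ∀ x, x ∈ C m → x ∈ J := fun m x hx => hJAdd m hx
  have key : ∀ m : ℕ, ∀ x ∈ J, ∃ a ∈ R', x - a ∈ C (m + 1) := by
    intro m
    induction m with
    | zero =>
        intro x hx
        obtain ⟨a, ha, hxa⟩ := hsum x
        exact ⟨a, ha, hxa⟩
    | succ m ih =>
        intro x hx
        obtain ⟨a, ha, hs⟩ := ih x hx
        have hsub : C (m + 1) ≤ R'.toAddSubgroup ⊔ C (m + 2) := by
          refine AddSubgroup.closure_le _ |>.2 ?_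
          rintro w ⟨p, hp, y, hy, rfl⟩
          obtain ⟨a1, ha1, hs1⟩ := ih p (setPow_subset_ideal J m hp)
          obtain ⟨b1, hb1, ht1⟩ := ih y hy
          have ha1J : a1 ∈ J := by
            have := J.sub_mem (setPow_subset_ideal J m hp) (hCJ _ _ hs1)
            simpa using this
          have hb1J : b1 ∈ J := by
            have := J.sub_mem hy (hCJ _ _ ht1)
            simpa using this
          have h1 : a1 * (y - b1) ∈ C (m + 2) := by
            refine mul_mem_closure_aux (AddSubgroup.subset_closure ha1J) ht1 ?_
            intro u hu v hv
            exact AddSubgroup.subset_closure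
              (setPow_le J (by omega) (setPow_mul_mem _ _ 0 u v hu hv))
          have h2 : (p - a1) * b1 ∈ C (m + 2) := by
            refine mul_mem_closure_aux hs1 (AddSubgroup.subset_closure hb1J) ?_
            intro u hu v hv
            exact AddSubgroup.subset_closure
              (setPow_le J (by omega) (setPow_mul_mem _ 0 _ u v hu hv))
          have h3 : (p - a1) * (y - b1) ∈ C (m + 2) := by
            refine mul_mem_closure_aux hs1 ht1 ?_
            intro u hu v hv
            exact AddSubgroup.subset_closure
              (setPow_le J (by omega) (setPow_mul_mem _ _ _ u v hu hv))
          have heq : p * y = a1 * b1 +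
              (a1 * (y - b1) + (p - a1) * b1 + (p - a1) * (y - b1)) := by
            noncomm_ring
          show p * y ∈ _
          rw [heq]
          exact AddSubgroup.add_mem _
            (AddSubgroup.mem_sup_left (R'.mul_mem ha1 hb1))
            (AddSubgroup.mem_sup_right
              (AddSubgroup.add_mem _ (AddSubgroup.add_mem _ h1 h2) h3))
        have := hsub hs
        rw [AddSubgroup.mem_sup] at this
        obtain ⟨b, hb, c, hc, hbc⟩ := this
        refine ⟨a + b, R'.add_mem ha hb, ?_⟩
        have : x - (a + b) = c := by
          have : b + c = x - a := hbc
          linear_combination (norm := abel) this.symm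
        rw [this]
        exact hc
  intro r
  obtain ⟨n, hn⟩ := hnil
  obtain ⟨a, ha, hr⟩ := hsum r
  have hrJ : r - a ∈ J := hCJ 1 _ hr
  obtain ⟨b, hb, hs⟩ := key n (r - a) hrJ
  have h0 : r - a - b = 0 := by
    have hle : C (n + 1) ≤ ⊥ := by
      refine AddSubgroup.closure_le _ |>.2 ?_
      intro x hx
      have : x ∈ ({0} : Set R) := hn (setPow_succ_subset J n hx)
      simpa using this
    simpa using hle hs
  have : r = a + b := by linear_combination (norm := abel) h0
  rw [this]
  exact R'.add_mem ha hb
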